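/- Let {X_e : e ∈ T_k} be i.i.d. random variables with |T_k| ≤ 2^{2k+1} whose negative parts satisfy P(X_e^- > x) = e^{−x²f(x)} for x ≥ M₀, with f positive increasing. Let V_k^- = Σ_{e∈T_k} X_e^- and B_k(v) = {2^{−k}V_k^- ∈ [2^{N−v}, 2^{N−v+1})}. Then there exists a universal positive constant C so that for any integer v with M := 2^{N−k−v−2} ≥ M₀ (and M sufficiently large that M²f(M)² > 2f(M)), one has P(B_k(v)) ≤ e^{−C·2^{2(N−v)}·f(M)}. -/

import Mathlib

/-!
The shells `T_k` of edges of Model 1 (`d = 1`): `T_k` is a finite set of edges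
with `|T_k| ≤ 2^{2k+1}`, and the weights `{X_e}` are i.i.d. with negative-part
tail `P(X_e⁻ > x) = e^{-x² f(x)}` for `x ≥ M₀`.  `V_k^- = Σ_{e ∈ T_k} X_e^-`
and `B_k(v) = {2^{-k} V_k^- ∈ [2^{N-v}, 2^{N-v+1})}`.
-/

open MeasureTheory ProbabilityTheory Filter

namespace Stmt17

/-- `V_k^- = Σ_{e ∈ T_k} X_e^-`. -/
noncomputable def Vneg {E : Type} (T : ℕ → Finset E) (X : E → Ω → ℝ) (k : ℕ) (ω : Ω) : ℝ :=
  ∑ e ∈ T k, max (-(X e ω)) 0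

/-- The event `B_k(v) = {2^{-k} V_k^- ∈ [2^{N-v}, 2^{N-v+1})}`. -/
def Bevent {E : Type} (T : ℕ → Finset E) (X : E → Ω → ℝ) (N k v : ℕ) : Set Ω :=
  {ω | (2 : ℝ) ^ (-(k : ℤ)) * Vneg T X k ω ∈
    Set.Ico ((2 : ℝ) ^ ((N : ℤ) - (v : ℤ))) ((2 : ℝ) ^ ((N : ℤ) - (v : ℤ) + 1))}

end Stmt17

open Stmt17

lemma half1_aux (s u x : ℝ) (hs : 2 ≤ s) (hu : 2 < u) (hx : 0 ≤ x) (hxs : x ≤ s) :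
    Real.exp (-(s*u) + x * Real.log 2) ≤ 1/2 * Real.exp (-(s*u/4)) := by
  have hl1 : 0 < Real.log 2 := Real.log_pos one_lt_two
  have hl2 : Real.log 2 ≤ 0.7 := le_of_lt (lt_trans Real.log_two_lt_d9 (by norm_num))
  rw [show (1:ℝ)/2 * Real.exp (-(s*u/4)) = Real.exp (-(s*u/4) - Real.log 2) by
    rw [Real.exp_sub, Real.exp_log (by norm_num : (0:ℝ) < 2)]; ring]
  apply Real.exp_le_exp.mpr
  have hxl : x * Real.log 2 ≤ s * (7/10) :=
    mul_le_mul hxs (by linarith) hl1.le (by linarith)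
  have hq0 : s * 2 ≤ s * u := mul_le_mul_of_nonneg_left hu.le (by linarith)
  linarith

lemma half2_aux (s u x : ℝ) (hs : 2 ≤ s) (hu : 2 < u) (hx : 0 ≤ x) (hxs : x ≤ s) :
    x * Real.exp (-(s*s*u)) ≤ 1/2 * Real.exp (-(s*u/4)) := by
  have hspos : (0:ℝ) < s := by linarith
  have hq : 2*s ≤ s*u := by
    have := mul_le_mul_of_nonneg_left hu.le hspos.le
    linarith
  have h74 : (7/4:ℝ) ≤ s - 1/4 := by linarith
  have hsunn : (0:ℝ) ≤ s*u := by linarith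
  have hx1 : (2*s)*(7/4) ≤ (s*u)*(s - 1/4) := mul_le_mul hq h74 (by norm_num) hsunn
  have hexp := Real.add_one_le_exp (s*s*u - s*u/4)
  have hbig : 2*s ≤ Real.exp (s*s*u - s*u/4) := by nlinarith [hexp, hx1, hspos]
  have hpos := Real.exp_pos (s*s*u - s*u/4)
  have hinv : Real.exp (s*u/4 - s*s*u) = (Real.exp (s*s*u - s*u/4))⁻¹ := by
    rw [← Real.exp_neg]; congr 1; ring
  have hkey : s * Real.exp (s*u/4 - s*s*u) ≤ 1/2 := by
    rw [hinv, ← div_eq_mul_inv, div_le_iff₀ hpos]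
    linarith
  calc x * Real.exp (-(s*s*u)) ≤ s * Real.exp (-(s*s*u)) :=
      mul_le_mul_of_nonneg_right hxs (Real.exp_pos _).le
    _ = (s * Real.exp (s*u/4 - s*s*u)) * Real.exp (-(s*u/4)) := by
        rw [show -(s*s*u) = -(s*u/4) + (s*u/4 - s*s*u) by ring, Real.exp_add]
        ring
    _ ≤ 1/2 * Real.exp (-(s*u/4)) := mul_le_mul_of_nonneg_right hkey (Real.exp_pos _).le

lemma aux_mgf_le {Ω : Type} [MeasurableSpace Ω] (P : Measure Ω) [IsProbabilityMeasure P]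
    (Y : Ω → ℝ) (hY : Measurable Y) (M c t₀ : ℝ) (hM : 0 < M) (hc : 0 < c) (ht₀ : 0 ≤ t₀)
    (hMc : 2 ≤ M ^ 2 * c)
    (htail : ∀ x : ℝ, M ≤ x → (P {ω | x < Y ω}).toReal ≤ Real.exp (-(x ^ 2 * c))) :
    mgf (fun ω => min (max (Y ω - M) 0) t₀) P (M * c) ≤ 2 := by
  set lam := M * c with hlam
  have hlampos : 0 < lam := mul_pos hM hc
  set Z : Ω → ℝ := fun ω => min (max (Y ω - M) 0) t₀ with hZdef
  have hZmeas : Measurable Z :=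
    ((hY.sub measurable_const).max measurable_const).min measurable_const
  have hZ0 : ∀ ω, 0 ≤ Z ω := fun ω => le_min (le_max_right _ _) ht₀
  have hZt : ∀ ω, Z ω ≤ t₀ := fun ω => min_le_right _ _
  set J := ⌈lam * t₀⌉₊ with hJ
  set S : ℕ → Set Ω := fun j => {ω | (j : ℝ) < lam * Z ω} with hS
  have hSmeas : ∀ j, MeasurableSet (S j) := fun j =>
    measurableSet_lt measurable_const (hZmeas.const_mul lam)
  set g : Ω → ℝ := fun ω =>
    1 + ∑ j ∈ Finset.range J, Set.indicator (S j) (fun _ => Real.exp ((j : ℝ) + 1)) ω with hg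
  have hpt : ∀ ω, Real.exp (lam * Z ω) ≤ g ω := by
    intro ω
    have hterm : ∀ j ∈ Finset.range J,
        0 ≤ Set.indicator (S j) (fun _ => Real.exp ((j : ℝ) + 1)) ω := fun j _ =>
      Set.indicator_nonneg (fun _ _ => (Real.exp_pos _).le) ω
    have hsumnn : 0 ≤ ∑ j ∈ Finset.range J,
        Set.indicator (S j) (fun _ => Real.exp ((j : ℝ) + 1)) ω := Finset.sum_nonneg hterm
    rcases eq_or_lt_of_le (mul_nonneg hlampos.le (hZ0 ω)) with h0 | h0
    · show Real.exp (lam * Z ω) ≤ 1 + _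
      rw [← h0, Real.exp_zero]
      linarith
    · set x := lam * Z ω with hx
      set j : ℕ := ⌈x⌉₊ - 1 with hj
      have hceil : 1 ≤ ⌈x⌉₊ := Nat.one_le_ceil_iff.mpr h0
      have hj1 : j + 1 = ⌈x⌉₊ := by omega
      have hxle : x ≤ (j : ℝ) + 1 := by
        have h := Nat.le_ceil x
        rw [← hj1] at h
        push_cast at h
        linarith
      have hjx : (j : ℝ) < x := by
        have h := Nat.ceil_lt_add_one (le_of_lt h0)
        rw [← hj1] at h
        push_cast at h
        linarith
      have hjJ : j ∈ Finset.range J := by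
        refine Finset.mem_range.mpr ?_
        have hle : ⌈x⌉₊ ≤ J := Nat.ceil_le_ceil (by
          exact mul_le_mul_of_nonneg_left (hZt ω) hlampos.le)
        omega
      have hmem : ω ∈ S j := hjx
      have hind : Set.indicator (S j) (fun _ => Real.exp ((j : ℝ) + 1)) ω
          = Real.exp ((j : ℝ) + 1) := Set.indicator_of_mem hmem _
      have hsingle : Real.exp ((j : ℝ) + 1) ≤ ∑ j' ∈ Finset.range J,
          Set.indicator (S j') (fun _ => Real.exp ((j' : ℝ) + 1)) ω := by
        rw [← hind]
        exact Finset.single_le_sum hterm hjJ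
      have : Real.exp x ≤ Real.exp ((j : ℝ) + 1) := Real.exp_le_exp.mpr hxle
      show Real.exp x ≤ 1 + _
      linarith
  have hint_g : Integrable g P := by
    refine (integrable_const 1).add (integrable_finset_sum _ fun j _ => ?_)
    exact (integrable_const _).indicator (hSmeas j)
  have hint_e : Integrable (fun ω => Real.exp (lam * Z ω)) P := by
    refine Integrable.mono' (integrable_const (Real.exp (lam * t₀)))
      ((hZmeas.const_mul lam).exp.aestronglyMeasurable) ?_
    refine Eventually.of_forall fun ω => ?_
    rw [Real.norm_eq_abs, abs_of_pos (Real.exp_pos _)]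
    exact Real.exp_le_exp.mpr (mul_le_mul_of_nonneg_left (hZt ω) hlampos.le)
  have hmgf : mgf Z P lam = ∫ ω, Real.exp (lam * Z ω) ∂P := rfl
  have h1 : ∫ ω, Real.exp (lam * Z ω) ∂P ≤ ∫ ω, g ω ∂P := integral_mono hint_e hint_g hpt
  have h2 : ∫ ω, g ω ∂P
      = 1 + ∑ j ∈ Finset.range J, (P (S j)).toReal * Real.exp ((j : ℝ) + 1) := by
    rw [hg]
    rw [integral_add (integrable_const 1)
      (integrable_finset_sum _ fun j _ => (integrable_const _).indicator (hSmeas j))]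
    rw [integral_const, integral_finset_sum _
      (fun j _ => (integrable_const _).indicator (hSmeas j))]
    simp only [probReal_univ, ENNReal.toReal_one, smul_eq_mul, one_mul]
    congr 1
    refine Finset.sum_congr rfl fun j _ => ?_
    rw [integral_indicator_const _ (hSmeas j), smul_eq_mul, Measure.real]
  have htailS : ∀ j : ℕ, (P (S j)).toReal ≤ Real.exp (-(M ^ 2 * c + 2 * j)) := by
    intro j
    have hjln : (0:ℝ) ≤ (j : ℝ) / lam := div_nonneg (Nat.cast_nonneg j) hlampos.le
    have hsub : S j ⊆ {ω | M + (j : ℝ) / lam < Y ω} := by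
      intro ω hω
      simp only [hS, Set.mem_setOf_eq] at hω ⊢
      have h1' : (j : ℝ) / lam < Z ω := (div_lt_iff₀ hlampos).mpr (by linarith [hω])
      have h2' : Z ω ≤ max (Y ω - M) 0 := min_le_left _ _
      have h4 : (j : ℝ) / lam < Y ω - M := by
        rcases le_or_gt (Y ω - M) 0 with h | h
        · rw [max_eq_right h] at h2'; linarith
        · rw [max_eq_left h.le] at h2'; linarith
      linarith
    have hms := ENNReal.toReal_mono (measure_ne_top P _) (measure_mono hsub)
    refine hms.trans ?_
    have hx : M ≤ M + (j : ℝ) / lam := by linarith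
    refine (htail _ hx).trans ?_
    apply Real.exp_le_exp.mpr
    have hjl : (j : ℝ) / lam * lam = j := div_mul_cancel₀ _ hlampos.ne'
    have key : M * ((j : ℝ) / lam) * c = j := by
      rw [hlam] at hjl ⊢
      nlinarith [hjl]
    nlinarith [sq_nonneg ((j : ℝ) / lam), mul_nonneg (mul_nonneg hjln hjln) hc.le]
  have hsum : ∑ j ∈ Finset.range J, (P (S j)).toReal * Real.exp ((j : ℝ) + 1) ≤ 1 := by
    have hr0 : (0:ℝ) ≤ Real.exp (-1) := (Real.exp_pos _).le
    have hr1 : Real.exp (-1) < 1 := Real.exp_lt_one_iff.mpr (by norm_num)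
    calc ∑ j ∈ Finset.range J, (P (S j)).toReal * Real.exp ((j : ℝ) + 1)
        ≤ ∑ j ∈ Finset.range J, Real.exp (-(M ^ 2 * c + 2 * j)) * Real.exp ((j : ℝ) + 1) :=
          Finset.sum_le_sum fun j _ =>
            mul_le_mul_of_nonneg_right (htailS j) (Real.exp_pos _).le
      _ = ∑ j ∈ Finset.range J, Real.exp (1 - M ^ 2 * c) * Real.exp (-1) ^ j := by
          refine Finset.sum_congr rfl fun j _ => ?_
          rw [← Real.exp_nat_mul, ← Real.exp_add, ← Real.exp_add]
          congr 1
          push_cast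
          ring
      _ = Real.exp (1 - M ^ 2 * c) * ∑ j ∈ Finset.range J, Real.exp (-1) ^ j := by
          rw [Finset.mul_sum]
      _ ≤ Real.exp (1 - M ^ 2 * c) * (1 - Real.exp (-1))⁻¹ := by
          refine mul_le_mul_of_nonneg_left ?_ (Real.exp_pos _).le
          have hsum' := Summable.sum_le_tsum (Finset.range J)
            (fun i _ => pow_nonneg hr0 i) (summable_geometric_of_lt_one hr0 hr1)
          rwa [tsum_geometric_of_lt_one hr0 hr1] at hsum'
      _ ≤ Real.exp (-1) * (1 - Real.exp (-1))⁻¹ := by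
          refine mul_le_mul_of_nonneg_right (Real.exp_le_exp.mpr (by linarith)) ?_
          rw [inv_nonneg]
          linarith
      _ ≤ 1 := by
          rw [Real.exp_neg]
          have he : (2:ℝ) ≤ Real.exp 1 := by
            have := Real.add_one_le_exp 1
            linarith
          have hainv : (Real.exp 1)⁻¹ ≤ 2⁻¹ := by
            exact inv_anti₀ (by norm_num) he
          have hpos : (0:ℝ) < 1 - (Real.exp 1)⁻¹ := by
            have : (2:ℝ)⁻¹ < 1 := by norm_num
            linarith
          have hinv2 : (1 - (Real.exp 1)⁻¹)⁻¹ ≤ 2 := by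
            have h12 : (2:ℝ)⁻¹ ≤ 1 - (Real.exp 1)⁻¹ := by linarith
            calc (1 - (Real.exp 1)⁻¹)⁻¹ ≤ ((2:ℝ)⁻¹)⁻¹ :=
                  inv_anti₀ (by norm_num) h12
              _ = 2 := by norm_num
          calc (Real.exp 1)⁻¹ * (1 - (Real.exp 1)⁻¹)⁻¹ ≤ 2⁻¹ * 2 :=
                mul_le_mul hainv hinv2 (by positivity) (by norm_num)
            _ = 1 := by norm_num
  calc mgf Z P lam = ∫ ω, Real.exp (lam * Z ω) ∂P := hmgf
    _ ≤ ∫ ω, g ω ∂P := h1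
    _ = 1 + ∑ j ∈ Finset.range J, (P (S j)).toReal * Real.exp ((j : ℝ) + 1) := h2
    _ ≤ 1 + 1 := by linarith
    _ = 2 := by norm_num

set_option maxHeartbeats 1000000 in
/-- Lemma 4.2.  With `{X_e : e ∈ T_k}` i.i.d.,
`|T_k| ≤ 2^{2k+1}` and negative-part tail `P(X_e⁻ > x) = e^{-x² f(x)}` for
`x ≥ M₀` (`f` positive increasing): there is a universal `C > 0` such that for
any integers `N, k, v` with `M := 2^{N-k-v-2} ≥ M₀` (and `M` large enough that
`M² f(M)² > 2 f(M)`), `P(B_k(v)) ≤ e^{-C 2^{2(N-v)} f(M)}`. -/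
theorem stmt_17
    {Ω : Type} [MeasurableSpace Ω] (P : Measure Ω) [IsProbabilityMeasure P]
    {E : Type} (T : ℕ → Finset E)
    (hcard : ∀ k, (T k).card ≤ 2 ^ (2 * k + 1))
    (X : E → Ω → ℝ)
    (hmeas : ∀ e, Measurable (X e))
    (hindep : iIndepFun X P)
    (hident : ∀ e e', Measure.map (X e) P = Measure.map (X e') P)
    (M₀ : ℝ) (hM₀ : 0 < M₀)
    (f : ℝ → ℝ) (hfpos : ∀ x, 0 < f x) (hfmono : Monotone f)
    (htail : ∀ e, ∀ x : ℝ, M₀ ≤ x →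
      (P {ω | x < max (-(X e ω)) 0}).toReal = Real.exp (-(x ^ 2 * f x))) :
    ∃ C > (0 : ℝ), ∀ N k v : ℕ,
      M₀ ≤ (2 : ℝ) ^ ((N : ℤ) - (k : ℤ) - (v : ℤ) - 2) →
      2 * f ((2 : ℝ) ^ ((N : ℤ) - (k : ℤ) - (v : ℤ) - 2)) <
        ((2 : ℝ) ^ ((N : ℤ) - (k : ℤ) - (v : ℤ) - 2)) ^ 2 *
          (f ((2 : ℝ) ^ ((N : ℤ) - (k : ℤ) - (v : ℤ) - 2))) ^ 2 →
      (P (Bevent T X N k v)).toReal ≤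
        Real.exp (-(C * (2 : ℝ) ^ (2 * ((N : ℤ) - (v : ℤ))) *
          f ((2 : ℝ) ^ ((N : ℤ) - (k : ℤ) - (v : ℤ) - 2)))) := by
  refine ⟨1/32, by norm_num, ?_⟩
  intro N k v hM₀M hMf
  set a : ℤ := (N : ℤ) - (k : ℤ) - (v : ℤ) - 2 with ha
  set M : ℝ := (2 : ℝ) ^ a with hMdef
  set c : ℝ := f M with hcdef
  have hMpos : 0 < M := zpow_pos (by norm_num) _
  have hcpos : 0 < c := hfpos M
  have hu2 : 2 < M ^ 2 * c := by
    have h' : 2 * c < (M ^ 2 * c) * c := by nlinarith [hMf]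
    exact lt_of_mul_lt_mul_right h' hcpos.le
  set tR : ℝ := (2 : ℝ) ^ ((N : ℤ) + (k : ℤ) - (v : ℤ) - 1) with htRdef
  have htRpos : 0 < tR := zpow_pos (by norm_num) _
  set s : ℝ := (2 : ℝ) ^ (2 * k + 1) with hsdef
  have hspos : 0 < s := by positivity
  have hsM : s * M = tR := by
    rw [hsdef, hMdef, htRdef, ← zpow_natCast (2:ℝ) (2*k+1),
      ← zpow_add₀ (two_ne_zero : (2:ℝ) ≠ 0)]
    congr 1
    push_cast
    ring
  have hs2 : (2:ℝ) ≤ s := by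
    rw [hsdef]
    calc (2:ℝ) = 2 ^ 1 := (pow_one 2).symm
      _ ≤ 2 ^ (2*k+1) := pow_le_pow_right₀ one_le_two (by omega)
  have hncard : ((T k).card : ℝ) ≤ s := by
    rw [hsdef]
    exact_mod_cast hcard k
  set Y : E → Ω → ℝ := fun e ω => max (-(X e ω)) 0 with hYdef
  have hYmeas : ∀ e, Measurable (Y e) := fun e => (hmeas e).neg.max measurable_const
  set Z : E → Ω → ℝ := fun e => (fun x : ℝ => min (max (max (-x) 0 - M) 0) tR) ∘ X e with hZdef
  have hgmeas : Measurable (fun x : ℝ => min (max (max (-x) 0 - M) 0) tR) :=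
    (((measurable_neg.max measurable_const).sub measurable_const).max
      measurable_const).min measurable_const
  have hZmeas : ∀ e, Measurable (Z e) := fun e => hgmeas.comp (hmeas e)
  have hZindep : iIndepFun Z P := by
    rw [hZdef]
    exact hindep.comp _ fun _ => hgmeas
  have hZeval : ∀ e ω, Z e ω = min (max (Y e ω - M) 0) tR := by
    intro e ω
    simp only [hZdef, hYdef, Function.comp_apply]
  have hZ0 : ∀ e ω, 0 ≤ Z e ω := by
    intro e ω; rw [hZeval]; exact le_min (le_max_right _ _) htRpos.le
  have hZtR : ∀ e ω, Z e ω ≤ tR := by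
    intro e ω; rw [hZeval]; exact min_le_right _ _
  set lam : ℝ := M * c with hlam
  have hlampos : 0 < lam := mul_pos hMpos hcpos
  have hmgf_le : ∀ e ∈ T k, mgf (Z e) P lam ≤ 2 := by
    intro e _
    have htail' : ∀ x : ℝ, M ≤ x →
        (P {ω | x < Y e ω}).toReal ≤ Real.exp (-(x ^ 2 * c)) := by
      intro x hx
      have := htail e x (hM₀M.trans hx)
      rw [show {ω | x < Y e ω} = {ω | x < max (-(X e ω)) 0} from rfl, this]
      apply Real.exp_le_exp.mpr
      have hfx : c ≤ f x := hfmono hx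
      nlinarith [sq_nonneg x]
    have haux := aux_mgf_le P (Y e) (hYmeas e) M c tR hMpos hcpos htRpos.le hu2.le htail'
    have hfun : Z e = fun ω => min (max (Y e ω - M) 0) tR := funext fun ω => hZeval e ω
    rw [hfun]
    exact haux
  set A1 : Set Ω := {ω | tR ≤ ∑ e ∈ T k, Z e ω} with hA1
  set A2 : Set Ω := ⋃ e ∈ T k, {ω | M + tR < Y e ω} with hA2
  have hVeq : ∀ ω, Vneg T X k ω = ∑ e ∈ T k, Y e ω := by
    intro ω; simp only [Vneg, hYdef]
  have hBsub : Bevent T X N k v ⊆ A1 ∪ A2 := by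
    intro ω hω
    have hω' : (2 : ℝ) ^ (-(k : ℤ)) * Vneg T X k ω ∈
        Set.Ico ((2 : ℝ) ^ ((N : ℤ) - (v : ℤ))) ((2 : ℝ) ^ ((N : ℤ) - (v : ℤ) + 1)) := hω
    have h1 := (Set.mem_Ico.mp hω').1
    have hVlow : 2 * tR ≤ Vneg T X k ω := by
      have hkpos : (0:ℝ) < (2:ℝ) ^ ((k:ℤ)) := zpow_pos (by norm_num) _
      have h2 := mul_le_mul_of_nonneg_left h1 hkpos.le
      have e1 : (2:ℝ) ^ ((k:ℤ)) * ((2:ℝ) ^ (-(k:ℤ)) * Vneg T X k ω) = Vneg T X k ω := by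
        rw [← mul_assoc, ← zpow_add₀ (two_ne_zero : (2:ℝ) ≠ 0)]
        simp
      have e2 : (2:ℝ) ^ ((k:ℤ)) * (2:ℝ) ^ ((N:ℤ) - (v:ℤ)) = 2 * tR := by
        rw [htRdef, ← zpow_add₀ (two_ne_zero : (2:ℝ) ≠ 0),
          show (2:ℝ) * (2:ℝ) ^ ((N:ℤ) + (k:ℤ) - (v:ℤ) - 1)
            = (2:ℝ) ^ (1:ℤ) * (2:ℝ) ^ ((N:ℤ) + (k:ℤ) - (v:ℤ) - 1) by norm_num,
          ← zpow_add₀ (two_ne_zero : (2:ℝ) ≠ 0)]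
        congr 1
        ring
      rw [e1, e2] at h2
      exact h2
    by_cases hA : ∃ e ∈ T k, M + tR < Y e ω
    · right
      obtain ⟨e, he, hYe⟩ := hA
      exact Set.mem_biUnion he hYe
    · left
      push_neg at hA
      show tR ≤ ∑ e ∈ T k, Z e ω
      have hZe : ∀ e ∈ T k, Y e ω - M ≤ Z e ω := by
        intro e he
        rw [hZeval]
        exact le_min (le_max_left _ _) (by linarith [hA e he])
      have hsum : ∑ e ∈ T k, (Y e ω - M) ≤ ∑ e ∈ T k, Z e ω := Finset.sum_le_sum hZe
      rw [Finset.sum_sub_distrib, Finset.sum_const, nsmul_eq_mul] at hsum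
      have hnM : ((T k).card : ℝ) * M ≤ tR := by
        calc ((T k).card : ℝ) * M ≤ s * M := mul_le_mul_of_nonneg_right hncard hMpos.le
          _ = tR := hsM
      have hVY := hVeq ω
      linarith [hVlow]
  have hint : Integrable (fun ω => Real.exp (lam * (∑ e ∈ T k, Z e) ω)) P := by
    refine Integrable.mono' (integrable_const (Real.exp (lam * (((T k).card : ℝ) * tR))))
      ?_ ?_
    · have hfe : (fun ω => Real.exp (lam * (∑ e ∈ T k, Z e) ω))
          = fun ω => Real.exp (lam * ∑ e ∈ T k, Z e ω) := by
        funext ω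
        rw [Finset.sum_apply]
      rw [hfe]
      exact ((Finset.measurable_sum (T k) fun e _ => hZmeas e).const_mul
        lam).exp.aestronglyMeasurable
    · refine Eventually.of_forall fun ω => ?_
      rw [Real.norm_eq_abs, abs_of_pos (Real.exp_pos _)]
      apply Real.exp_le_exp.mpr
      apply mul_le_mul_of_nonneg_left ?_ hlampos.le
      rw [Finset.sum_apply]
      calc ∑ e ∈ T k, Z e ω ≤ ∑ _e ∈ T k, tR :=
            Finset.sum_le_sum fun e _ => hZtR e ω
        _ = ((T k).card : ℝ) * tR := by rw [Finset.sum_const, nsmul_eq_mul]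
  have hchern := measure_ge_le_exp_mul_mgf (μ := P) (X := ∑ e ∈ T k, Z e) tR hlampos.le hint
  have hprod : mgf (∑ e ∈ T k, Z e) P lam = ∏ e ∈ T k, mgf (Z e) P lam :=
    hZindep.mgf_sum hZmeas (T k)
  have hprodle : ∏ e ∈ T k, mgf (Z e) P lam ≤ 2 ^ (T k).card := by
    calc ∏ e ∈ T k, mgf (Z e) P lam ≤ ∏ _e ∈ T k, (2:ℝ) :=
        Finset.prod_le_prod (fun e _ => mgf_nonneg) hmgf_le
      _ = 2 ^ (T k).card := Finset.prod_const 2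
  have hA1bound : (P A1).toReal ≤ Real.exp (-lam * tR) * 2 ^ (T k).card := by
    have hset : A1 = {ω | tR ≤ (∑ e ∈ T k, Z e) ω} := by
      ext ω
      simp [hA1, Finset.sum_apply]
    rw [hset]
    refine hchern.trans ?_
    rw [hprod]
    exact mul_le_mul_of_nonneg_left hprodle (Real.exp_pos _).le
  have hA2bound : (P A2).toReal ≤
      ((T k).card : ℝ) * Real.exp (-((M + tR) ^ 2 * f (M + tR))) := by
    have hle := measure_biUnion_finset_le (μ := P) (T k) (fun e => {ω | M + tR < Y e ω})
    have hne : (∑ e ∈ T k, P {ω | M + tR < Y e ω}) ≠ ⊤ :=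
      (ENNReal.sum_lt_top.mpr fun e _ => measure_lt_top P _).ne
    have h1 := ENNReal.toReal_mono hne hle
    rw [ENNReal.toReal_sum (fun e _ => measure_ne_top P _)] at h1
    refine h1.trans ?_
    have heach : ∀ e ∈ T k, (P {ω | M + tR < Y e ω}).toReal
        = Real.exp (-((M + tR) ^ 2 * f (M + tR))) := by
      intro e _
      exact htail e (M + tR) (by linarith [hM₀M])
    rw [Finset.sum_congr rfl heach, Finset.sum_const, nsmul_eq_mul]
  have hPB : (P (Bevent T X N k v)).toReal ≤ (P A1).toReal + (P A2).toReal := by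
    have h1 : P (Bevent T X N k v) ≤ P A1 + P A2 :=
      (measure_mono hBsub).trans (measure_union_le _ _)
    have h2 := ENNReal.toReal_mono
      (ENNReal.add_ne_top.mpr ⟨measure_ne_top P _, measure_ne_top P _⟩) h1
    rwa [ENNReal.toReal_add (measure_ne_top P _) (measure_ne_top P _)] at h2
  -- arithmetic
  set u : ℝ := M ^ 2 * c with hu
  have hM2 : M ^ 2 = (2:ℝ) ^ (2*a) := by
    rw [hMdef, ← zpow_natCast ((2:ℝ)^a) 2, ← zpow_mul]
    congr 1
    ring
  have hsz : s = (2:ℝ) ^ ((2*k+1 : ℕ) : ℤ) := by rw [hsdef, zpow_natCast]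
  have h8 : (2:ℝ) ^ (2*((N:ℤ) - (v:ℤ))) = 8 * s * M ^ 2 := by
    rw [hM2, hsz, show (8:ℝ) = (2:ℝ) ^ (3:ℤ) by norm_num,
      ← zpow_add₀ (two_ne_zero : (2:ℝ) ≠ 0), ← zpow_add₀ (two_ne_zero : (2:ℝ) ≠ 0)]
    congr 1
    rw [ha]
    push_cast
    ring
  have hsu : lam * tR = s * u := by rw [hlam, hu, ← hsM]; ring
  have hfMtR : tR ^ 2 * c = s * s * u := by rw [hu, ← hsM]; ring
  set n : ℝ := ((T k).card : ℝ) with hn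
  have hnn : 0 ≤ n := Nat.cast_nonneg _
  have h2n : Real.exp (n * Real.log 2) = (2:ℝ) ^ (T k).card := by
    rw [hn, Real.exp_nat_mul, Real.exp_log (by norm_num : (0:ℝ) < 2)]
  have half1 : Real.exp (-lam * tR) * 2 ^ (T k).card ≤ 1/2 * Real.exp (-(s*u/4)) := by
    rw [← h2n, ← Real.exp_add, neg_mul, hsu]
    exact half1_aux s u n hs2 hu2 hnn hncard
  have half2 : n * Real.exp (-((M + tR) ^ 2 * f (M + tR))) ≤ 1/2 * Real.exp (-(s*u/4)) := by
    have hstep1 : Real.exp (-((M + tR) ^ 2 * f (M + tR))) ≤ Real.exp (-(s*s*u)) := by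
      apply Real.exp_le_exp.mpr
      have hfc : c ≤ f (M + tR) := hfmono (by linarith)
      have hMT : tR ^ 2 ≤ (M + tR) ^ 2 := by
        apply pow_le_pow_left₀ htRpos.le (by linarith)
      have h1 : tR ^ 2 * c ≤ (M + tR) ^ 2 * f (M + tR) :=
        mul_le_mul hMT hfc hcpos.le (by positivity)
      rw [hfMtR] at h1
      linarith
    calc n * Real.exp (-((M + tR) ^ 2 * f (M + tR))) ≤ n * Real.exp (-(s*s*u)) :=
        mul_le_mul_of_nonneg_left hstep1 hnn
      _ ≤ 1/2 * Real.exp (-(s*u/4)) := half2_aux s u n hs2 hu2 hnn hncard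
  have hRHS : -(1/32 * (2:ℝ) ^ (2*((N:ℤ) - (v:ℤ))) * c) = -(s*u/4) := by
    rw [h8, hu]
    ring
  calc (P (Bevent T X N k v)).toReal ≤ (P A1).toReal + (P A2).toReal := hPB
    _ ≤ Real.exp (-lam * tR) * 2 ^ (T k).card
        + n * Real.exp (-((M + tR) ^ 2 * f (M + tR))) := add_le_add hA1bound hA2bound
    _ ≤ 1/2 * Real.exp (-(s*u/4)) + 1/2 * Real.exp (-(s*u/4)) := add_le_add half1 half2
    _ = Real.exp (-(s*u/4)) := by ring
    _ = Real.exp (-(1/32 * (2:ℝ) ^ (2*((N:ℤ) - (v:ℤ))) * c)) := by rw [hRHS]
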